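/- Let A be a commutative ℚ-algebra and let f, g ∈ A⟦t⟧ be formal power series with zero constant term, and let h ∈ A⟦t⟧ be the formal substitution of g into f (h(t) = f(g(t))). Writing f_n := n! · (coefficient of t^n in f), and similarly g_n and h_n, one has for every n ≥ 1: h_n = Σ_{k=1}^{n} f_k · B_{n,k}(g_1, g_2, …, g_{n−k+1}), where B_{n,k}(g_1, g_2, …) denotes the commutative partial Bell polynomial evaluated at d_i := g_i. -/

import Mathlib

open Finset MvPolynomial

/-- The (commutative) partial Bell polynomials. -/
noncomputable def pBell {A : Type*} [Ring A] (d : ℕ → A) : ℕ → ℕ → A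
  | 0, 0 => 1
  | _ + 1, 0 => 0
  | 0, _ + 1 => 0
  | n + 1, k + 1 =>
      ∑ j ∈ Finset.range (n + 1), (n.choose j : A) * (pBell d (n - j) k * d (j + 1))
  termination_by _ k => k

lemma pBell_zero_zero {A : Type*} [Ring A] (d : ℕ → A) : pBell d 0 0 = 1 := by rw [pBell]

lemma pBell_succ_zero {A : Type*} [Ring A] (d : ℕ → A) (n : ℕ) : pBell d (n+1) 0 = 0 := by
  rw [pBell]

lemma pBell_zero_succ {A : Type*} [Ring A] (d : ℕ → A) (k : ℕ) : pBell d 0 (k+1) = 0 := by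
  rw [pBell]

lemma pBell_succ_succ {A : Type*} [Ring A] (d : ℕ → A) (n k : ℕ) :
    pBell d (n+1) (k+1) =
      ∑ j ∈ Finset.range (n + 1), (n.choose j : A) * (pBell d (n - j) k * d (j + 1)) := by
  rw [pBell]

lemma map_pBell {A B : Type*} [Ring A] [Ring B] (φ : A →+* B) (d : ℕ → A) :
    ∀ k n, φ (pBell d n k) = pBell (fun i => φ (d i)) n k := by
  intro k
  induction k with
  | zero =>
    intro n
    cases n with
    | zero => simp [pBell_zero_zero]
    | succ n => simp [pBell_succ_zero]
  | succ k ih =>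
    intro n
    cases n with
    | zero => simp [pBell_zero_succ]
    | succ n =>
      rw [pBell_succ_succ, pBell_succ_succ, map_sum]
      refine Finset.sum_congr rfl fun j _ => ?_
      rw [map_mul, map_mul, map_natCast, ih]

lemma key_lemma {A : Type*} [CommRing A] [Algebra ℚ A] (g : PowerSeries A)
    (hg0 : PowerSeries.constantCoeff g = 0) :
    ∀ k n, (n.factorial : A) * PowerSeries.coeff n (g ^ k) =
      (k.factorial : A) *
        pBell (fun i => (i.factorial : A) * PowerSeries.coeff i g) n k := by
  intro k
  induction k with
  | zero =>
    intro n
    cases n with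
    | zero => simp [pBell_zero_zero]
    | succ n => simp [pBell_succ_zero, PowerSeries.coeff_one]
  | succ k ih =>
    intro n
    cases n with
    | zero =>
      rw [pBell_zero_succ]
      simp [PowerSeries.coeff_zero_eq_constantCoeff, map_pow, hg0]
    | succ n =>
      -- cancel the unit (k! : A)
      have hu : IsUnit ((k.factorial : A)) := by
        have h1 : IsUnit ((k.factorial : ℚ)) := by
          simp [isUnit_iff_ne_zero, Nat.factorial_ne_zero]
        have := h1.map (algebraMap ℚ A)
        rwa [map_natCast] at this
      apply hu.mul_left_cancel
      -- derivative identity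
      have hder : PowerSeries.derivativeFun (g ^ (k+1)) =
          (k+1 : ℕ) • (g ^ k * PowerSeries.derivativeFun g) := by
        have h := Derivation.leibniz_pow (PowerSeries.derivative A) g (k+1)
        simp only [Nat.add_sub_cancel, smul_eq_mul] at h
        rw [show ((PowerSeries.derivative A) (g^(k+1)) : PowerSeries A) =
              PowerSeries.derivativeFun (g^(k+1)) from rfl,
          show ((PowerSeries.derivative A) g : PowerSeries A) =
              PowerSeries.derivativeFun g from rfl] at h
        rw [h, nsmul_eq_mul]
      have hD : PowerSeries.coeff (n+1) (g ^ (k+1)) * ((n : A) + 1) =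
          (k+1 : ℕ) • ∑ i ∈ Finset.range (n+1),
            PowerSeries.coeff i (g ^ k) *
              (PowerSeries.coeff (n - i + 1) g * ((n - i : ℕ) + 1 : A)) := by
        have := congrArg (PowerSeries.coeff n) hder
        rw [show ∀ (f : PowerSeries A) (m : ℕ), PowerSeries.coeff m f.derivativeFun = PowerSeries.coeff (m+1) f * (m+1) from fun f m => PowerSeries.coeff_derivative f m] at this
        rw [this, map_nsmul, PowerSeries.coeff_mul,
          Finset.Nat.sum_antidiagonal_eq_sum_range_succ_mk]
        congr 1
        refine Finset.sum_congr rfl fun i _ => ?_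
        rw [show ∀ (f : PowerSeries A) (m : ℕ), PowerSeries.coeff m f.derivativeFun = PowerSeries.coeff (m+1) f * (m+1) from fun f m => PowerSeries.coeff_derivative f m]
      -- now compute
      set G : ℕ → A := fun i => (i.factorial : A) * PowerSeries.coeff i g with hG
      calc (k.factorial : A) * (((n+1).factorial : A) * PowerSeries.coeff (n+1) (g ^ (k+1)))
          = (k.factorial : A) * (n.factorial : A) *
              (PowerSeries.coeff (n+1) (g ^ (k+1)) * ((n : A) + 1)) := by
            rw [Nat.factorial_succ]; push_cast; ring
        _ = (k.factorial : A) * (n.factorial : A) *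
              ((k+1 : ℕ) • ∑ i ∈ Finset.range (n+1),
                PowerSeries.coeff i (g ^ k) *
                  (PowerSeries.coeff (n - i + 1) g * ((n - i : ℕ) + 1 : A))) := by
            rw [hD]
        _ = ∑ i ∈ Finset.range (n+1),
              ((k+1 : A) * (k.factorial : A)) *
                (((n.factorial : A) * ((n - i : ℕ) + 1 : A)) *
                  (PowerSeries.coeff i (g ^ k) * PowerSeries.coeff (n - i + 1) g)) := by
            rw [nsmul_eq_mul, Finset.mul_sum, Finset.mul_sum]
            refine Finset.sum_congr rfl fun i _ => ?_
            push_cast; ring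
        _ = ∑ i ∈ Finset.range (n+1),
              ((k+1 : A) * (k.factorial : A)) *
                ((n.choose i : A) *
                  (((i.factorial : A) * PowerSeries.coeff i (g ^ k)) *
                    (((n - i + 1).factorial : A) * PowerSeries.coeff (n - i + 1) g))) := by
            refine Finset.sum_congr rfl fun i hi => ?_
            have hin : i ≤ n := Nat.lt_succ_iff.mp (Finset.mem_range.mp hi)
            have hnat : n.factorial * (n - i + 1) =
                n.choose i * (i.factorial * (n - i + 1).factorial) := by
              rw [Nat.factorial_succ, ← Nat.choose_mul_factorial_mul_factorial hin]
              ring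
            have hcast : (n.factorial : A) * ((n - i : ℕ) + 1 : A) =
                (n.choose i : A) * ((i.factorial : A) * ((n - i + 1).factorial : A)) := by
              have := congrArg (fun m : ℕ => (m : A)) hnat
              push_cast at this
              convert this using 2 <;> push_cast <;> ring
            rw [hcast]; ring
        _ = ∑ i ∈ Finset.range (n+1),
              ((k+1 : A) * (k.factorial : A)) *
                ((n.choose i : A) *
                  (((k.factorial : A) * pBell G i k) * G (n - i + 1))) := by
            refine Finset.sum_congr rfl fun i _ => ?_
            rw [ih i, hG]
        _ = (k.factorial : A) * (((k+1).factorial : A) *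
              ∑ i ∈ Finset.range (n+1),
                (n.choose i : A) * (pBell G i k * G (n - i + 1))) := by
            rw [Nat.factorial_succ, Finset.mul_sum, Finset.mul_sum]
            refine Finset.sum_congr rfl fun i _ => ?_
            push_cast; ring
        _ = (k.factorial : A) * (((k+1).factorial : A) * pBell G (n+1) (k+1)) := by
            rw [pBell_succ_succ]
            congr 1
            congr 1
            rw [← Finset.sum_range_reflect (fun j =>
              (n.choose j : A) * (pBell G (n - j) k * G (j + 1))) (n+1)]
            refine Finset.sum_congr rfl fun i hi => ?_
            have hin : i ≤ n := Nat.lt_succ_iff.mp (Finset.mem_range.mp hi)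
            simp only [Nat.add_sub_cancel]
            rw [Nat.choose_symm hin, Nat.sub_sub_self hin]

/-- Faà di Bruno for formal power series: if `f, g` have zero constant term and `h` is the
formal substitution of `g` into `f` (i.e. `coeff m h = ∑_{k ≤ m} coeff k f · coeff m (g^k)`),
then, writing `f_n = n!·coeff n f` etc., `h_n = ∑_{k=1}^{n} f_k · B_{n,k}(g_1, g_2, …)`. -/
theorem stmt15 {A : Type*} [CommRing A] [Algebra ℚ A]
    (f g h : PowerSeries A)
    (hf0 : PowerSeries.constantCoeff f = 0)
    (hg0 : PowerSeries.constantCoeff g = 0)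
    (hh : ∀ m : ℕ, PowerSeries.coeff m h =
      ∑ k ∈ Finset.range (m + 1),
        PowerSeries.coeff k f * PowerSeries.coeff m (g ^ k)) :
    ∀ n : ℕ, 1 ≤ n →
      (n.factorial : A) * PowerSeries.coeff n h =
        ∑ k ∈ Finset.Icc 1 n,
          ((k.factorial : A) * PowerSeries.coeff k f) *
            MvPolynomial.aeval (fun i => (i.factorial : A) * PowerSeries.coeff i g)
              (pBell (fun i => (X i : MvPolynomial ℕ ℚ)) n k) := by
  intro n hn
  set G : ℕ → A := fun i => (i.factorial : A) * PowerSeries.coeff i g with hG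
  have haev : ∀ k, (MvPolynomial.aeval G)
      (pBell (fun i => (X i : MvPolynomial ℕ ℚ)) n k) = pBell G n k := by
    intro k
    have := map_pBell (MvPolynomial.aeval G (R := ℚ) : MvPolynomial ℕ ℚ →ₐ[ℚ] A).toRingHom
      (fun i => (X i : MvPolynomial ℕ ℚ)) k n
    simpa using this
  rw [hh n, Finset.mul_sum]
  have hrange : Finset.range (n+1) = insert 0 (Finset.Icc 1 n) := by
    ext x; simp [Nat.lt_succ_iff]; omega
  rw [hrange, Finset.sum_insert (by simp)]
  have hzero : (n.factorial : A) *
      (PowerSeries.coeff 0 f * PowerSeries.coeff n (g ^ 0)) = 0 := by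
    obtain ⟨m, rfl⟩ := Nat.exists_eq_add_of_le hn
    simp [PowerSeries.coeff_one]
  rw [hzero, zero_add]
  refine Finset.sum_congr rfl fun k _ => ?_
  rw [haev k]
  have := key_lemma g hg0 k n
  calc (n.factorial : A) * (PowerSeries.coeff k f * PowerSeries.coeff n (g ^ k))
      = PowerSeries.coeff k f * ((n.factorial : A) * PowerSeries.coeff n (g ^ k)) := by ring
    _ = PowerSeries.coeff k f * ((k.factorial : A) * pBell G n k) := by rw [this]
    _ = ((k.factorial : A) * PowerSeries.coeff k f) * pBell G n k := by ring
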